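/- Let R be a ring and suppose given R-modules T, A₂, A₃, B₂, B₃ with R-linear maps forming two exact rows 0 → T → A₂ →^φ A₃ → 0 and 0 → T → B₂ →^ψ B₃ → 0 (with the same first term T), together with injective R-linear maps ι₂ : A₂ → B₂ and ι₃ : A₃ → B₃ such that the resulting diagram commutes, where the left vertical map is the identity of T (i.e. the composite T → A₂ → B₂ equals T → B₂, and ψ ∘ ι₂ = ι₃ ∘ φ). If the surjection ψ : B₂ → B₃ admits an R-linear section and the injection ι₃ admits an R-linear retraction, then the injection ι₂ admits an R-linear retraction. (This is the module-theoretic content of Proposition 3.4 of the paper, combined there with the descent diagram of Theorem 2.1.) -/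

import Mathlib

/-- **(Module-theoretic content of Proposition 3.4.)** Given two exact rows
`0 → T → A₂ →^φ A₃ → 0` and `0 → T → B₂ →^ψ B₃ → 0` with the same first term `T`,
injective maps `ι₂ : A₂ → B₂` and `ι₃ : A₃ → B₃` making the diagram commute
(the left vertical map being the identity of `T`), if `ψ` admits an `R`-linear
section and `ι₃` admits an `R`-linear retraction, then `ι₂` admits an
`R`-linear retraction. -/
theorem retraction_from_descent_prop_3_4
    {R : Type*} [Ring R]
    {T A₂ A₃ B₂ B₃ : Type*}
    [AddCommGroup T] [AddCommGroup A₂] [AddCommGroup A₃]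
    [AddCommGroup B₂] [AddCommGroup B₃]
    [Module R T] [Module R A₂] [Module R A₃] [Module R B₂] [Module R B₃]
    (a : T →ₗ[R] A₂) (φ : A₂ →ₗ[R] A₃)
    (b : T →ₗ[R] B₂) (ψ : B₂ →ₗ[R] B₃)
    (ι₂ : A₂ →ₗ[R] B₂) (ι₃ : A₃ →ₗ[R] B₃)
    -- exactness of the row 0 → T → A₂ → A₃ → 0
    (ha : Function.Injective a)
    (hrowA : LinearMap.range a = LinearMap.ker φ)
    (hφ : Function.Surjective φ)
    -- exactness of the row 0 → T → B₂ → B₃ → 0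
    (hb : Function.Injective b)
    (hrowB : LinearMap.range b = LinearMap.ker ψ)
    (hψ : Function.Surjective ψ)
    -- ι₂, ι₃ are injective
    (hι₂ : Function.Injective ι₂)
    (hι₃ : Function.Injective ι₃)
    -- commutativity: the left vertical map is the identity of T
    (hsq1 : ι₂ ∘ₗ a = b)
    (hsq2 : ψ ∘ₗ ι₂ = ι₃ ∘ₗ φ)
    -- ψ admits a section, ι₃ admits a retraction
    (hsec : ∃ s : B₃ →ₗ[R] B₂, ψ ∘ₗ s = LinearMap.id)
    (hret : ∃ r : B₃ →ₗ[R] A₃, r ∘ₗ ι₃ = LinearMap.id) :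
    ∃ r : B₂ →ₗ[R] A₂, r ∘ₗ ι₂ = LinearMap.id := by
  obtain ⟨s, hs⟩ := hsec
  obtain ⟨r₃, hr₃⟩ := hret
  -- q : B₂ → T, the projection onto T via the splitting of the B row
  have hker : ∀ x : B₂, x - s (ψ x) ∈ LinearMap.ker ψ := by
    intro x
    have := congrArg (fun f => f (ψ x)) hs
    simp only [LinearMap.coe_comp, Function.comp_apply, LinearMap.id_apply] at this
    simp [LinearMap.mem_ker, this]
  let k : B₂ →ₗ[R] LinearMap.ker ψ :=
    (LinearMap.id - s ∘ₗ ψ).codRestrict (LinearMap.ker ψ) (by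
      intro x; simpa using hker x)
  let eB : T ≃ₗ[R] LinearMap.range b := LinearEquiv.ofInjective b hb
  let eq1 : (LinearMap.ker ψ : Submodule R B₂) ≃ₗ[R] LinearMap.range b :=
    LinearEquiv.ofEq _ _ hrowB.symm
  let q : B₂ →ₗ[R] T := (eB.symm.toLinearMap ∘ₗ eq1.toLinearMap) ∘ₗ k
  have hbq : ∀ x : B₂, b (q x) = x - s (ψ x) := by
    intro x
    have : (eB (q x) : B₂) = x - s (ψ x) := by
      simp only [q, LinearMap.coe_comp, Function.comp_apply, LinearEquiv.coe_coe]
      rw [eB.apply_symm_apply]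
      rfl
    exact (LinearEquiv.ofInjective_apply b (h := hb) (q x)).symm.trans this
  -- τ : A₃ → A₂ with τ ∘ φ = id - a ∘ q ∘ ι₂
  have hqb : ∀ t : T, q (b t) = t := by
    intro t
    apply hb
    rw [hbq]
    have : ψ (b t) = 0 := by
      have : b t ∈ LinearMap.ker ψ := hrowB ▸ LinearMap.mem_range_self b t
      simpa using this
    simp [this]
  let g : A₂ →ₗ[R] A₂ := LinearMap.id - a ∘ₗ q ∘ₗ ι₂
  have hg : LinearMap.ker φ ≤ LinearMap.ker g := by
    intro x hx
    rw [← hrowA] at hx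
    obtain ⟨t, rfl⟩ := hx
    have hι₂a : ι₂ (a t) = b t := congrArg (fun f => f t) hsq1
    simp [g, hι₂a, hqb t]
  let eA : (A₂ ⧸ LinearMap.ker φ) ≃ₗ[R] A₃ := φ.quotKerEquivOfSurjective hφ
  let τ : A₃ →ₗ[R] A₂ := (LinearMap.ker φ).liftQ g hg ∘ₗ eA.symm.toLinearMap
  have hτφ : ∀ x : A₂, τ (φ x) = g x := by
    intro x
    have h1 : eA.symm (φ x) = Submodule.Quotient.mk x := by
      rw [LinearEquiv.symm_apply_eq]
      rfl
    simp only [τ, LinearMap.coe_comp, Function.comp_apply, LinearEquiv.coe_coe, h1]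
    rfl
  refine ⟨a ∘ₗ q + τ ∘ₗ r₃ ∘ₗ ψ, ?_⟩
  ext x
  have h2 : ψ (ι₂ x) = ι₃ (φ x) := congrArg (fun f => f x) hsq2
  have h3 : r₃ (ι₃ (φ x)) = φ x := congrArg (fun f => f (φ x)) hr₃
  have h4 : a (q (ι₂ x)) + τ (φ x) = x := by
    rw [hτφ]
    simp [g]
  simp only [LinearMap.add_comp, LinearMap.add_apply, LinearMap.coe_comp,
    Function.comp_apply, LinearMap.id_comp, LinearMap.id_apply, h2, h3]
  exact h4
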